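/- Let m ≥ q ≥ 1 and define e(λ) for partitions λ by the Ku–Wong recurrence e(∅) = 1 and e(λ₁,…,λ_r) = (−1)^{λ_r}·e(λ₁,…,λ_{r−1}) + (−1)^{r−1}·λ_r·e(λ₁−1,…,λ_r−1). Then (m−q+1)·|e(m,q)| ≤ |e(m+1,q−1)|, with equality if and only if q = 1 or m = q = 2. -/

import Mathlib

/-- The partition obtained by deleting the first column: subtract 1 from
each part and drop zero parts. -/
def colErase (l : List ℕ) : List ℕ := (l.map (· - 1)).filter (· ≠ 0)

/-- A list of naturals represents a partition if it is weakly decreasing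
with all parts positive. -/
def IsPartition (l : List ℕ) : Prop := l.Pairwise (· ≥ ·) ∧ ∀ x ∈ l, 0 < x

/-- Derangement numbers. -/
def D : ℕ → ℤ
  | 0 => 1
  | n+1 => ((n:ℤ)+1) * D n + (-1)^(n+1)

/-- Absolute value of two-row eigenvalues. -/
def g : ℕ → ℕ → ℤ
  | m, 0 => D m
  | m, j+1 => D m + ((j:ℤ)+1) * g (m-1) j

lemma D_succ (n : ℕ) : D (n+1) = ((n:ℤ)+1) * D n + (-1)^(n+1) := rfl

lemma D_ge (n : ℕ) (h : 2 ≤ n) : (n:ℤ) - 1 ≤ D n := by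
  induction n, h using Nat.le_induction with
  | base => norm_num [D]
  | succ n hn ih =>
    rw [D_succ]
    rcases neg_one_pow_eq_or ℤ (n+1) with h1 | h1 <;> rw [h1] <;> push_cast <;> nlinarith

lemma D_nonneg (n : ℕ) : 0 ≤ D n := by
  match n with
  | 0 => norm_num [D]
  | 1 => norm_num [D]
  | (n+2) => have := D_ge (n+2) (by omega); push_cast at this ⊢; linarith

lemma D_one_le (n : ℕ) (h : 2 ≤ n) : 1 ≤ D n := by
  have := D_ge n h
  have : (2:ℤ) ≤ n := by exact_mod_cast h
  linarith [D_ge n ‹2 ≤ n›]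

lemma g_nonneg (j : ℕ) : ∀ m, 0 ≤ g m j := by
  induction j with
  | zero => intro m; exact D_nonneg m
  | succ j ih =>
    intro m
    show 0 ≤ D m + ((j:ℤ)+1) * g (m-1) j
    have := D_nonneg m
    have := ih (m-1)
    positivity

lemma Dstep (n : ℕ) : ((n:ℤ)+1) * D n - 1 ≤ D (n+1) := by
  rw [D_succ]
  rcases neg_one_pow_eq_or ℤ (n+1) with h1 | h1 <;> rw [h1] <;> linarith

lemma lemmaB_le (j : ℕ) : ∀ m, j + 2 ≤ m → g m j ≤ ((j:ℤ)+2) * D m - 1 := by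
  induction j with
  | zero =>
    intro m hm
    have := D_one_le m hm
    show D m ≤ ((0:ℤ)+2) * D m - 1
    linarith
  | succ j ih =>
    intro m hm
    obtain ⟨k, rfl⟩ : ∃ k, m = k + 1 := ⟨m - 1, by omega⟩
    have hk : j + 2 ≤ k := by omega
    have hik := ih k hk
    have hDk : (1:ℤ) ≤ D k := D_one_le k (by omega)
    have hks : ((k:ℤ)+1) * D k - 1 ≤ D (k+1) := Dstep k
    have hkc : (j:ℤ) + 2 ≤ k := by exact_mod_cast hk
    show D (k+1) + ((j:ℤ)+1) * g k j ≤ ((j:ℤ)+1+2) * D (k+1) - 1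
    nlinarith [mul_le_mul_of_nonneg_left hik (show (0:ℤ) ≤ (j:ℤ)+1 by positivity),
      mul_le_mul_of_nonneg_left hDk (show (0:ℤ) ≤ 2*((j:ℤ)+2) by positivity),
      mul_le_mul_of_nonneg_right hkc (D_nonneg k)]

lemma lemmaB_lt (j m : ℕ) (hm : j + 2 ≤ m) (hne : ¬(j = 0 ∧ m = 2)) :
    g m j < ((j:ℤ)+2) * D m - 1 := by
  match j with
  | 0 =>
    have hm3 : 3 ≤ m := by omega
    have := D_ge m (by omega)
    have hc : (3:ℤ) ≤ m := by exact_mod_cast hm3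
    show D m < ((0:ℤ)+2) * D m - 1
    linarith
  | j+1 =>
    obtain ⟨k, rfl⟩ : ∃ k, m = k + 1 := ⟨m - 1, by omega⟩
    have hk : j + 2 ≤ k := by omega
    have hik := lemmaB_le j k hk
    have hDk : (1:ℤ) ≤ D k := D_one_le k (by omega)
    have hks : ((k:ℤ)+1) * D k - 1 ≤ D (k+1) := Dstep k
    have hkc : (j:ℤ) + 2 ≤ k := by exact_mod_cast hk
    show D (k+1) + ((j:ℤ)+1) * g k j < ((j:ℤ)+1+2) * D (k+1) - 1
    nlinarith [mul_le_mul_of_nonneg_left hik (show (0:ℤ) ≤ (j:ℤ)+1 by positivity),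
      mul_le_mul_of_nonneg_left hDk (show (0:ℤ) ≤ 2*((j:ℤ)+2) by positivity),
      mul_le_mul_of_nonneg_right hkc (D_nonneg k)]

lemma main_eq1 (k : ℕ) : ((k:ℤ)+1) * g (k+1) 1 = g (k+2) 0 := by
  show ((k:ℤ)+1) * (D (k+1) + ((0:ℤ)+1) * g k 0) = D (k+2)
  show ((k:ℤ)+1) * (D (k+1) + ((0:ℤ)+1) * D k) = D (k+2)
  rw [D_succ (k+1), D_succ k]
  have : ((-1:ℤ))^(k+1+1) = -((-1)^(k+1)) := by rw [pow_succ]; ring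
  rw [this]
  push_cast
  ring

lemma main_le (j : ℕ) : ∀ m, j + 1 ≤ m → ((m:ℤ) - j) * g m (j+1) ≤ g (m+1) j := by
  induction j with
  | zero =>
    intro m hm
    obtain ⟨k, rfl⟩ : ∃ k, m = k + 1 := ⟨m - 1, by omega⟩
    have := main_eq1 k
    push_cast
    push_cast at this
    linarith
  | succ j ih =>
    intro m hm
    obtain ⟨k, rfl⟩ : ∃ k, m = k + 1 := ⟨m - 1, by omega⟩
    have hk : j + 1 ≤ k := by omega
    have hih := ih k hk
    have hB := lemmaB_le j (k+1) (by omega)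
    have hks : ((k:ℤ)+1+1) * D (k+1) - 1 ≤ D (k+2) := Dstep (k+1)
    have hg1 : (0:ℤ) ≤ g k (j+1) := g_nonneg (j+1) k
    have hg2 : (0:ℤ) ≤ g (k+1) j := g_nonneg j (k+1)
    have hkc : (j:ℤ) + 1 ≤ k := by exact_mod_cast hk
    have e1 : g (k+1) (j+2) = D (k+1) + ((j:ℤ)+1+1) * g k (j+1) := rfl
    have e2 : g (k+2) (j+1) = D (k+2) + ((j:ℤ)+1) * g (k+1) j := rfl
    push_cast
    rw [show ((k:ℤ)+1) - ((j:ℤ)+1) = (k:ℤ) - j by ring]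
    rw [e1, e2]
    nlinarith [mul_le_mul_of_nonneg_left hih (show (0:ℤ) ≤ (j:ℤ)+2 by positivity),
      mul_le_mul_of_nonneg_right (show (0:ℤ) ≤ (k:ℤ) - j by linarith) (D_nonneg (k+1))]

lemma main_lt (j m : ℕ) (hm : j + 2 ≤ m) (hne : ¬(j = 0 ∧ m = 2)) :
    ((m:ℤ) - (j+1)) * g m (j+2) < g (m+1) (j+1) := by
  obtain ⟨k, rfl⟩ : ∃ k, m = k + 1 := ⟨m - 1, by omega⟩
  have hk : j + 1 ≤ k := by omega
  have hih := main_le j k hk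
  have hB := lemmaB_lt j (k+1) (by omega) (by omega)
  have hks : ((k:ℤ)+1+1) * D (k+1) - 1 ≤ D (k+2) := Dstep (k+1)
  have hg1 : (0:ℤ) ≤ g k (j+1) := g_nonneg (j+1) k
  have hg2 : (0:ℤ) ≤ g (k+1) j := g_nonneg j (k+1)
  have hkc : (j:ℤ) + 1 ≤ k := by exact_mod_cast hk
  have e1 : g (k+1) (j+2) = D (k+1) + ((j:ℤ)+1+1) * g k (j+1) := rfl
  have e2 : g (k+2) (j+1) = D (k+2) + ((j:ℤ)+1) * g (k+1) j := rfl
  push_cast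
  rw [e1, e2]
  nlinarith [mul_le_mul_of_nonneg_left hih (show (0:ℤ) ≤ (j:ℤ)+2 by positivity),
    mul_le_mul_of_nonneg_right (show (0:ℤ) ≤ (k:ℤ) - j by linarith) (D_nonneg (k+1))]
section etrans
variable (e : List ℕ → ℤ) (h0 : e [] = 1)
  (hrec : ∀ l : List ℕ, IsPartition l → l ≠ [] →
      e l = (-1) ^ (l.getLastD 0) * e l.dropLast
        + (-1) ^ (l.length - 1) * (l.getLastD 0 : ℤ) * e (colErase l))

include h0 hrec

lemma e_one : ∀ n, e [n+1] = D (n+1) := by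
  intro n
  induction n with
  | zero =>
    have h := hrec [1] ⟨by simp, by simp⟩ (by simp)
    simp [colErase, h0] at h
    rw [h]; norm_num [D]
  | succ k ih =>
    have h := hrec [k+2] ⟨by simp, by simp⟩ (by simp)
    have hc : colErase [k+2] = [k+1] := by simp [colErase]
    rw [hc] at h
    simp [h0] at h
    rw [h, ih, D_succ (k+1)]
    push_cast
    ring

lemma e_two : ∀ j k, j ≤ k → e [k+1, j+1] = (-1)^(j+1) * g (k+1) (j+1) := by
  intro j
  induction j with
  | zero =>
    intro k hk
    have hp : IsPartition [k+1, 1] := by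
      constructor
      · simp [List.pairwise_cons] <;> omega
      · intro x hx; simp at hx; omega
    have h := hrec [k+1, 1] hp (by simp)
    simp [h0] at h
    match k with
    | 0 =>
      have hc : colErase [1, 1] = [] := by simp [colErase]
      rw [hc, h0] at h
      rw [h]
      have h1 : e [0+1] = D 1 := e_one e h0 hrec 0
      norm_num at h1
      rw [h1]
      show _ = (-1:ℤ)^1 * (D 1 + ((0:ℤ)+1) * g 0 0)
      show _ = (-1:ℤ)^1 * (D 1 + ((0:ℤ)+1) * D 0)
      norm_num [D]
    | (k'+1) =>
      have hc : colErase [k'+2, 1] = [k'+1] := by simp [colErase]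
      rw [hc] at h
      rw [h, e_one e h0 hrec (k'+1), e_one e h0 hrec k']
      show _ = (-1:ℤ)^1 * (D (k'+2) + ((0:ℤ)+1) * g (k'+1) 0)
      show _ = (-1:ℤ)^1 * (D (k'+2) + ((0:ℤ)+1) * D (k'+1))
      ring
  | succ j ih =>
    intro k hk
    obtain ⟨k', rfl⟩ : ∃ k', k = k' + 1 := ⟨k - 1, by omega⟩
    have hp : IsPartition [k'+2, j+2] := by
      constructor
      · simp [List.pairwise_cons] <;> omega
      · intro x hx; simp at hx; omega
    have h := hrec [k'+2, j+2] hp (by simp)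
    have hc : colErase [k'+2, j+2] = [k'+1, j+1] := by simp [colErase]
    rw [hc] at h
    simp [h0] at h
    rw [h, e_one e h0 hrec (k'+1), ih k' (by omega)]
    show _ = (-1:ℤ)^(j+2) * (D (k'+2) + ((j:ℤ)+1+1) * g (k'+1) (j+1))
    have : ((-1:ℤ))^(j+2) = -((-1)^(j+1)) := by rw [pow_succ]; ring
    rw [this]
    push_cast
    ring

end etrans

theorem stmt_9 (e : List ℕ → ℤ) (h0 : e [] = 1)
    (hrec : ∀ l : List ℕ, IsPartition l → l ≠ [] →
      e l = (-1) ^ (l.getLastD 0) * e l.dropLast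
        + (-1) ^ (l.length - 1) * (l.getLastD 0 : ℤ) * e (colErase l))
    (m q : ℕ) (hq : 1 ≤ q) (hmq : q ≤ m) :
    ((m : ℤ) - q + 1) * |e [m, q]| ≤ |e (if q = 1 then [m + 1] else [m + 1, q - 1])| ∧
      (((m : ℤ) - q + 1) * |e [m, q]| = |e (if q = 1 then [m + 1] else [m + 1, q - 1])| ↔
        q = 1 ∨ (m = 2 ∧ q = 2)) := by
  obtain ⟨j, rfl⟩ : ∃ j, q = j + 1 := ⟨q - 1, by omega⟩
  obtain ⟨k, rfl⟩ : ∃ k, m = k + 1 := ⟨m - 1, by omega⟩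
  have hjk : j ≤ k := by omega
  have habs2 : ∀ j' k', j' ≤ k' → |e [k'+1, j'+1]| = g (k'+1) (j'+1) := by
    intro j' k' h
    rw [e_two e h0 hrec j' k' h, abs_mul, abs_pow, abs_neg, abs_one, one_pow, one_mul,
      abs_of_nonneg (g_nonneg (j'+1) (k'+1))]
  match j with
  | 0 =>
    rw [if_pos rfl]
    have h1 : |e [k+1, 1]| = g (k+1) 1 := habs2 0 k (by omega)
    have h2 : e [k+1+1] = D (k+2) := e_one e h0 hrec (k+1)
    have h2' : |e [k+1+1]| = D (k+2) := by rw [h2]; exact abs_of_nonneg (D_nonneg (k+2))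
    have heq : ((k:ℤ)+1) * g (k+1) 1 = D (k+2) := main_eq1 k
    have hco : ((k+1:ℕ) : ℤ) - ((0:ℕ)+1 : ℕ) + 1 = (k:ℤ) + 1 := by push_cast; ring
    constructor
    · rw [h1, h2']; push_cast; linarith
    · constructor
      · intro _; left; rfl
      · intro _; rw [h1, h2']; push_cast; linarith
  | j+1 =>
    have hne1 : (j:ℕ) + 1 + 1 ≠ 1 := by omega
    simp only [if_neg hne1]
    have hsub : (j:ℕ) + 1 + 1 - 1 = j + 1 := rfl
    rw [hsub]
    have h1 : |e [k+1, j+2]| = g (k+1) (j+2) := habs2 (j+1) k (by omega)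
    have h2 : |e [k+1+1, j+1]| = g (k+2) (j+1) := habs2 j (k+1) (by omega)
    have hle : ((k:ℤ)+1 - (j+1)) * g (k+1) (j+2) ≤ g (k+2) (j+1) := by
      have := main_le (j+1) (k+1) (by omega)
      push_cast at this ⊢
      linarith
    constructor
    · rw [h1, h2]; push_cast; push_cast at hle; linarith
    · constructor
      · intro heq
        by_cases hc : k = 1 ∧ j = 0
        · right; omega
        · exfalso
          have hlt := main_lt j (k+1) (by omega) (by omega)
          rw [h1, h2] at heq
          push_cast at heq hlt
          linarith
      · rintro (h | ⟨hm2, hq2⟩)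
        · omega
        · have hk1 : k = 1 := by omega
          have hj0 : j = 0 := by omega
          subst hk1; subst hj0
          rw [h1, h2]
          have e1 : g 2 2 = D 2 + ((1:ℤ)+1) * g 1 1 := rfl
          have e2 : g 1 1 = D 1 + ((0:ℤ)+1) * g 0 0 := rfl
          have e3 : g 0 0 = D 0 := rfl
          have e4 : g 3 1 = D 3 + ((0:ℤ)+1) * g 2 0 := rfl
          have e5 : g 2 0 = D 2 := rfl
          rw [e1, e2, e3, e4, e5]
          norm_num [D]
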